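/- Let C4 = ⟨κ⟩ be the cyclic group of order 4 acting ℤ-linearly on ℤ⁶ (standard basis e₁,…,e₆) by κe₁ = −e₁, κe₂ = −e₂, κe₃ = −e₄, κe₄ = e₃, κe₅ = −e₆, κe₆ = e₅, and let Γ₁ = ℤ⁶ ⋊ C4. Then Γ₁ has exactly ten conjugacy classes of subgroups of order two; moreover, six of these classes consist of subgroups whose normalizer in Γ₁ is isomorphic to ℤ² × ℤ/2, and four consist of subgroups whose normalizer in Γ₁ is isomorphic to ℤ² ⋊ ℤ/4, where the generator of ℤ/4 acts on ℤ² by multiplication by −1. -/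

import Mathlib

/-- A monoid hom out of `Multiplicative (ZMod n)` determined by an element `g` with `g ^ n = 1`. -/
def zmodPowHom {G : Type*} [Monoid G] (n : ℕ) [NeZero n] (g : G) (h : g ^ n = 1) :
    Multiplicative (ZMod n) →* G where
  toFun x := g ^ (Multiplicative.toAdd x).val
  map_one' := by
    show g ^ (0 : ZMod n).val = 1
    simp [ZMod.val_zero]
  map_mul' x y := by
    have key : ∀ m : ℕ, g ^ (m % n) = g ^ m := fun m => by
      conv_rhs => rw [← Nat.div_add_mod m n]
      rw [pow_add, pow_mul, h, one_pow, one_mul]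
    show g ^ ((Multiplicative.toAdd x) + (Multiplicative.toAdd y)).val = _
    rw [ZMod.val_add, key, pow_add]

/-- The cyclic group of order 4, written multiplicatively. -/
abbrev C4 : Type := Multiplicative (ZMod 4)

/-- The matrix of the order-four map `κ` on `ℤ⁶`:
`κe₁ = -e₁, κe₂ = -e₂, κe₃ = -e₄, κe₄ = e₃, κe₅ = -e₆, κe₆ = e₅`
(so on coordinate vectors, `(κv)₃ = v₄, (κv)₄ = -v₃, (κv)₅ = v₆, (κv)₆ = -v₅`). -/
def kappaMatrix : Matrix (Fin 6) (Fin 6) ℤ :=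
  !![-1,0,0,0,0,0; 0,-1,0,0,0,0; 0,0,0,1,0,0; 0,0,-1,0,0,0; 0,0,0,0,0,1; 0,0,0,0,-1,0]

/-- The linear action of `C4` on `ℤ⁶` generated by `κ`. -/
noncomputable def kappaRep : Representation ℤ C4 (Fin 6 → ℤ) :=
  zmodPowHom 4 (Matrix.toLinAlgEquiv' kappaMatrix)
    (by rw [← map_pow, show kappaMatrix ^ 4 = 1 by decide, map_one])

/-- The multiplicative automorphism of `Multiplicative M` given by `ρ g`. -/
noncomputable def repEquiv {G M : Type} [Group G] [AddCommGroup M] [Module ℤ M]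
    (ρ : Representation ℤ G M) (g : G) : Multiplicative M ≃* Multiplicative M :=
  AddEquiv.toMultiplicative <| LinearEquiv.toAddEquiv <|
    LinearEquiv.ofLinear (ρ g) (ρ g⁻¹)
      (by rw [← Module.End.mul_eq_comp, ← map_mul, mul_inv_cancel, map_one, Module.End.one_eq_id])
      (by rw [← Module.End.mul_eq_comp, ← map_mul, inv_mul_cancel, map_one, Module.End.one_eq_id])

/-- The action of `G` on `Multiplicative M` by multiplicative automorphisms induced by `ρ`. -/
noncomputable def repMulAut {G M : Type} [Group G] [AddCommGroup M] [Module ℤ M]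
    (ρ : Representation ℤ G M) : G →* MulAut (Multiplicative M) where
  toFun g := repEquiv ρ g
  map_one' := by
    ext x
    show Multiplicative.ofAdd ((ρ 1) (Multiplicative.toAdd x)) = x
    rw [map_one]; rfl
  map_mul' g h := by
    ext x
    show Multiplicative.ofAdd ((ρ (g * h)) (Multiplicative.toAdd x)) =
      Multiplicative.ofAdd ((ρ g) ((ρ h) (Multiplicative.toAdd x)))
    rw [map_mul]; rfl

/-- The orbifold fundamental group `Γ₁ = ℤ⁶ ⋊ C4` of `T⁶/(ℤ/4)`. -/
noncomputable abbrev Gamma1 : Type :=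
  (Multiplicative (Fin 6 → ℤ)) ⋊[repMulAut kappaRep] C4

/-- The representation of `C4` on `ℤ²` where the generator acts by multiplication by `-1`. -/
noncomputable def negRep : Representation ℤ C4 (Fin 2 → ℤ) :=
  zmodPowHom 4 (-1 : Module.End ℤ (Fin 2 → ℤ))
    (by rw [show (4 : ℕ) = 2 * 2 from rfl, pow_mul, neg_one_sq, one_pow])

/-- `N₁ = ℤ² × ℤ/2`. -/
abbrev N1 : Type := Multiplicative (Fin 2 → ℤ) × Multiplicative (ZMod 2)

/-- `N₂ = ℤ² ⋊ ℤ/4`, the generator of `ℤ/4` acting on `ℤ²` by multiplication by `-1`. -/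
noncomputable abbrev N2 : Type := (Multiplicative (Fin 2 → ℤ)) ⋊[repMulAut negRep] C4

noncomputable section
open Multiplicative
namespace G1P

@[simp] lemma v6_0 {α : Type*} (a b c d e f : α) : ![a,b,c,d,e,f] 0 = a := rfl
@[simp] lemma v6_1 {α : Type*} (a b c d e f : α) : ![a,b,c,d,e,f] 1 = b := rfl
@[simp] lemma v6_2 {α : Type*} (a b c d e f : α) : ![a,b,c,d,e,f] 2 = c := rfl
@[simp] lemma v6_3 {α : Type*} (a b c d e f : α) : ![a,b,c,d,e,f] 3 = d := rfl
@[simp] lemma v6_4 {α : Type*} (a b c d e f : α) : ![a,b,c,d,e,f] 4 = e := rfl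
@[simp] lemma v6_5 {α : Type*} (a b c d e f : α) : ![a,b,c,d,e,f] 5 = f := rfl

@[simp] lemma peel0 {α : Type*} (v : Fin 6 → α) : Matrix.vecHead v = v 0 := rfl
@[simp] lemma peel1 {α : Type*} (v : Fin 6 → α) :
    Matrix.vecHead (Matrix.vecTail v) = v 1 := rfl
@[simp] lemma peel2 {α : Type*} (v : Fin 6 → α) :
    Matrix.vecHead (Matrix.vecTail (Matrix.vecTail v)) = v 2 := rfl
@[simp] lemma peel3 {α : Type*} (v : Fin 6 → α) :
    Matrix.vecHead (Matrix.vecTail (Matrix.vecTail (Matrix.vecTail v))) = v 3 := rfl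
@[simp] lemma peel4 {α : Type*} (v : Fin 6 → α) :
    Matrix.vecHead (Matrix.vecTail (Matrix.vecTail (Matrix.vecTail (Matrix.vecTail v)))) = v 4 := rfl
@[simp] lemma peel5 {α : Type*} (v : Fin 6 → α) :
    Matrix.vecHead (Matrix.vecTail (Matrix.vecTail (Matrix.vecTail (Matrix.vecTail
      (Matrix.vecTail v))))) = v 5 := rfl

def act (x : ZMod 4) (v : Fin 6 → ℤ) : Fin 6 → ℤ := (kappaMatrix ^ x.val).mulVec v

lemma act_pow_mod (m : ℕ) : kappaMatrix ^ (m % 4) = kappaMatrix ^ m := by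
  conv_rhs => rw [← Nat.div_add_mod m 4]
  rw [pow_add, pow_mul, show kappaMatrix ^ 4 = 1 by decide, one_pow, one_mul]

lemma act_add (x : ZMod 4) (v w : Fin 6 → ℤ) : act x (v + w) = act x v + act x w :=
  Matrix.mulVec_add _ _ _

lemma act_neg (x : ZMod 4) (v : Fin 6 → ℤ) : act x (-v) = -(act x v) := by
  have := Matrix.mulVec_sub (kappaMatrix ^ x.val) 0 v
  simpa [act, sub_eq_add_neg] using this

lemma act_act (x y : ZMod 4) (v : Fin 6 → ℤ) : act x (act y v) = act (x + y) v := by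
  unfold act
  rw [Matrix.mulVec_mulVec, ← pow_add, ZMod.val_add, act_pow_mod]

lemma act_zero (v : Fin 6 → ℤ) : act 0 v = v := by
  unfold act; norm_num

lemma act_one (v : Fin 6 → ℤ) : act 1 v = ![-(v 0), -(v 1), v 3, -(v 2), v 5, -(v 4)] := by
  unfold act
  rw [show (1 : ZMod 4).val = 1 from rfl, pow_one]
  simp [kappaMatrix, Matrix.cons_mulVec, Matrix.cons_dotProduct,
    Matrix.vecHead, Matrix.vecTail]

lemma act_two (v : Fin 6 → ℤ) : act 2 v = ![v 0, v 1, -(v 2), -(v 3), -(v 4), -(v 5)] := by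
  rw [show (2 : ZMod 4) = 1 + 1 by decide, ← act_act, act_one, act_one]
  funext i; fin_cases i <;> simp

lemma act_three (v : Fin 6 → ℤ) : act 3 v = ![-(v 0), -(v 1), -(v 3), v 2, -(v 5), v 4] := by
  rw [show (3 : ZMod 4) = 1 + 2 by decide, ← act_act, act_two, act_one]
  funext i; fin_cases i <;> simp

def mkG (v : Fin 6 → ℤ) (x : ZMod 4) : Gamma1 := ⟨ofAdd v, ofAdd x⟩

lemma kappaRep_apply (x : ZMod 4) (v : Fin 6 → ℤ) :
    kappaRep (ofAdd x) v = act x v := by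
  show ((Matrix.toLinAlgEquiv' kappaMatrix : Module.End ℤ (Fin 6 → ℤ)) ^ (toAdd (ofAdd x)).val) v = _
  rw [← map_pow, show (toAdd (ofAdd x)).val = x.val from rfl,
    show ((Matrix.toLinAlgEquiv' (kappaMatrix ^ x.val) : Module.End ℤ (Fin 6 → ℤ))) v
      = Matrix.toLin' (kappaMatrix ^ x.val) v from rfl, Matrix.toLin'_apply]
  rfl

lemma mkG_mul (v w : Fin 6 → ℤ) (x y : ZMod 4) :
    mkG v x * mkG w y = mkG (v + act x w) (x + y) := by
  apply SemidirectProduct.ext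
  · show (ofAdd v) * (repMulAut kappaRep (ofAdd x)) (ofAdd w) = ofAdd (v + _)
    show (ofAdd v) * ofAdd (kappaRep (ofAdd x) w) = _
    rw [kappaRep_apply, ← ofAdd_add]
  · rfl

lemma mkG_one : (1 : Gamma1) = mkG 0 0 := rfl

lemma mkG_inj {v w : Fin 6 → ℤ} {x y : ZMod 4} (h : mkG v x = mkG w y) : v = w ∧ x = y := by
  unfold mkG at h
  rw [SemidirectProduct.ext_iff] at h
  exact ⟨ofAdd.injective h.1, ofAdd.injective h.2⟩

lemma mkG_eq_iff {v w : Fin 6 → ℤ} {x y : ZMod 4} : mkG v x = mkG w y ↔ v = w ∧ x = y :=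
  ⟨mkG_inj, by rintro ⟨rfl, rfl⟩; rfl⟩

lemma mkG_surj (γ : Gamma1) : ∃ v x, γ = mkG v x := by
  exact ⟨toAdd γ.left, toAdd γ.right, rfl⟩

lemma mkG_inv (v : Fin 6 → ℤ) (x : ZMod 4) : (mkG v x)⁻¹ = mkG (-(act (-x) v)) (-x) := by
  symm
  rw [eq_inv_iff_mul_eq_one, mkG_mul]
  simp [mkG_one, mkG_eq_iff]

lemma conj_mkG (u v : Fin 6 → ℤ) (x y : ZMod 4) :
    mkG u x * mkG v y * (mkG u x)⁻¹ = mkG (u + act x v - act y u) y := by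
  rw [mkG_inv, mkG_mul, mkG_mul, act_neg, act_act,
    show x + y + -x = y by ring, sub_eq_add_neg]

end G1P
namespace G1P

def W : Fin 10 → Fin 6 → ℤ :=
  ![![0,0,1,0,0,0], ![0,0,0,0,1,0], ![0,0,1,0,1,0], ![0,0,1,0,0,1], ![0,0,1,1,1,0],
    ![0,0,1,0,1,1], ![0,0,0,0,0,0], ![0,0,1,1,0,0], ![0,0,0,0,1,1], ![0,0,1,1,1,1]]

def gg (j : Fin 10) : Gamma1 := mkG (W j) 2

def HH (j : Fin 10) : Subgroup Gamma1 := Subgroup.zpowers (gg j)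

lemma W01 (j : Fin 10) : W j 0 = 0 ∧ W j 1 = 0 := by fin_cases j <;> exact ⟨rfl, rfl⟩

lemma order2 (v : Fin 6 → ℤ) (h0 : v 0 = 0) (h1 : v 1 = 0) : mkG v 2 * mkG v 2 = 1 := by
  rw [mkG_mul, mkG_one, mkG_eq_iff]
  refine ⟨?_, by decide⟩
  rw [act_two]
  funext i; fin_cases i <;> simp [h0, h1]

lemma mkG2_ne_one (v : Fin 6 → ℤ) : mkG v 2 ≠ 1 := by
  rw [mkG_one, Ne, mkG_eq_iff]
  rintro ⟨-, h⟩; exact absurd h (by decide)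

lemma gg_sq (j : Fin 10) : gg j * gg j = 1 :=
  order2 _ (W01 j).1 (W01 j).2

lemma orderOf_gg (j : Fin 10) : orderOf (gg j) = 2 :=
  orderOf_eq_prime (by rw [pow_two]; exact gg_sq j) (mkG2_ne_one _)

lemma card_HH (j : Fin 10) : Nat.card (HH j) = 2 := by
  rw [HH, Nat.card_zpowers, orderOf_gg]

lemma mem_zpowers_order2 {g x : Gamma1} (hg : g * g = 1) (hx : x ∈ Subgroup.zpowers g) :
    x = 1 ∨ x = g := by
  obtain ⟨n, hn⟩ := hx
  simp only at hn
  subst hn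
  have hg2 : g ^ (2 : ℤ) = 1 := by rw [zpow_two]; exact hg
  rcases Int.even_or_odd n with ⟨k, hk⟩ | ⟨k, hk⟩
  · left
    subst hk
    rw [show k + k = 2 * k by ring, zpow_mul, hg2, one_zpow]
  · right
    subst hk
    rw [zpow_add, zpow_mul, hg2, one_zpow, one_mul, zpow_one]

/-- mod 2 reduction -/
def rr (v : Fin 6 → ℤ) : Fin 6 → ZMod 2 := fun i => (v i : ZMod 2)

/-- the swap induced by κ mod 2 -/
def sw (b : Fin 6 → ZMod 2) : Fin 6 → ZMod 2 := ![b 0, b 1, b 3, b 2, b 5, b 4]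

lemma rr_act_two (v : Fin 6 → ℤ) : rr (act 2 v) = rr v := by
  funext i; fin_cases i <;> simp [rr, act_two, CharTwo.neg_eq]

lemma rr_act_one (v : Fin 6 → ℤ) : rr (act 1 v) = sw (rr v) := by
  funext i; fin_cases i <;> simp [rr, sw, act_one, CharTwo.neg_eq]

lemma rr_act_three (v : Fin 6 → ℤ) : rr (act 3 v) = sw (rr v) := by
  funext i; fin_cases i <;> simp [rr, sw, act_three, CharTwo.neg_eq]

lemma rr_sub (v w : Fin 6 → ℤ) : rr (v - w) = rr v - rr w := by
  funext i; simp [rr]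

lemma rr_add (v w : Fin 6 → ℤ) : rr (v + w) = rr v + rr w := by
  funext i; simp [rr]

lemma key_distinct : ∀ j k : Fin 10, j ≠ k → rr (W j) ≠ rr (W k) ∧ sw (rr (W j)) ≠ rr (W k) := by
  decide

end G1P
namespace G1P

lemma conj_gg (u : Fin 6 → ℤ) (x : ZMod 4) (j : Fin 10) :
    mkG u x * gg j * (mkG u x)⁻¹ = mkG (u + act x (W j) - act 2 u) 2 :=
  conj_mkG u (W j) x 2

lemma not_conj (j k : Fin 10) (hjk : j ≠ k) (γ : Gamma1) :
    Subgroup.map (MulAut.conj γ).toMonoidHom (HH j) ≠ HH k := by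
  intro h
  obtain ⟨u, x, rfl⟩ := mkG_surj γ
  rw [HH, HH, MonoidHom.map_zpowers] at h
  have hmem : (MulAut.conj (mkG u x)).toMonoidHom (gg j) ∈ Subgroup.zpowers (gg k) :=
    h ▸ Subgroup.mem_zpowers _
  have hconj : (MulAut.conj (mkG u x)).toMonoidHom (gg j)
      = mkG (u + act x (W j) - act 2 u) 2 := by
    rw [show (MulAut.conj (mkG u x)).toMonoidHom (gg j)
        = mkG u x * gg j * (mkG u x)⁻¹ from rfl, conj_gg]
  rcases mem_zpowers_order2 (gg_sq k) hmem with h1 | h1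
  · rw [hconj] at h1; exact mkG2_ne_one _ h1
  · rw [hconj] at h1
    have hveq := (mkG_inj h1).1
    have hr : rr (act x (W j)) = rr (W k) := by
      rw [← hveq, show u + act x (W j) - act 2 u = act x (W j) + (u - act 2 u) by ring,
        rr_add, rr_sub, rr_act_two]
      simp
    rcases (by decide : ∀ y : ZMod 4, y = 0 ∨ y = 1 ∨ y = 2 ∨ y = 3) x with rfl | rfl | rfl | rfl
    · rw [act_zero] at hr; exact (key_distinct j k hjk).1 hr
    · rw [rr_act_one] at hr; exact (key_distinct j k hjk).2 hr
    · rw [rr_act_two] at hr; exact (key_distinct j k hjk).1 hr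
    · rw [rr_act_three] at hr; exact (key_distinct j k hjk).2 hr

lemma conj_exists (v : Fin 6 → ℤ) (j : Fin 10) (x : ZMod 4)
    (hc0 : act x (W j) 0 = 0) (hc1 : act x (W j) 1 = 0)
    (hv0 : v 0 = 0) (hv1 : v 1 = 0)
    (hr : rr v = rr (act x (W j))) :
    ∃ γ : Gamma1, γ * gg j * γ⁻¹ = mkG v 2 := by
  set c := act x (W j) with hc
  have hdvd : ∀ i, (2 : ℤ) ∣ (v i - c i) := by
    intro i
    have h1 : ((v i - c i : ℤ) : ZMod 2) = 0 := by
      push_cast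
      rw [show ((v i : ℤ) : ZMod 2) = rr v i from rfl, hr]
      simp [rr]
    exact_mod_cast (ZMod.intCast_zmod_eq_zero_iff_dvd _ 2).mp h1
  have hcoord : ∀ i, ((v i - c i) / 2) + ((v i - c i) / 2) = v i - c i := by
    intro i
    have := Int.mul_ediv_cancel' (hdvd i)
    omega
  refine ⟨mkG (fun i => (v i - c i) / 2) x, ?_⟩
  rw [show gg j = mkG (W j) 2 from rfl, conj_mkG, mkG_eq_iff, ← hc]
  refine ⟨?_, rfl⟩
  funext i
  fin_cases i
  · simp [act_two, hc0, hv0]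
  · simp [act_two, hc1, hv1]
  · have := hcoord 2; simp [act_two]; omega
  · have := hcoord 3; simp [act_two]; omega
  · have := hcoord 4; simp [act_two]; omega
  · have := hcoord 5; simp [act_two]; omega

lemma surround : ∀ b : Fin 6 → ZMod 2, b 0 = 0 → b 1 = 0 →
    ∃ j : Fin 10, b = rr (W j) ∨ b = sw (rr (W j)) := by decide

lemma complete (K : Subgroup Gamma1) (hK : Nat.card K = 2) :
    ∃ (j : Fin 10) (γ : Gamma1), Subgroup.map (MulAut.conj γ).toMonoidHom (HH j) = K := by
  have hfin : Finite K := Nat.finite_of_card_ne_zero (by rw [hK]; exact two_ne_zero)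
  have hnt : Nontrivial K := Finite.one_lt_card_iff_nontrivial.mp (by rw [hK]; exact one_lt_two)
  obtain ⟨y, hy⟩ := exists_ne (1 : K)
  have hord : orderOf y = 2 := by
    have hdvd : orderOf y ∣ 2 := hK ▸ orderOf_dvd_natCard y
    rcases (Nat.prime_two).eq_one_or_self_of_dvd _ hdvd with h | h
    · exact absurd (orderOf_eq_one_iff.mp h) hy
    · exact h
  have hgo : orderOf (y : Gamma1) = 2 := by
    rw [← hord]; exact orderOf_injective K.subtype Subtype.coe_injective y
  have hg1 : (y : Gamma1) ≠ 1 := by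
    intro h
    exact hy (Subtype.ext h)
  have hgsq : (y : Gamma1) * (y : Gamma1) = 1 := by
    rw [← pow_two, ← hgo]; exact pow_orderOf_eq_one _
  have hzK : Subgroup.zpowers (y : Gamma1) = K :=
    Subgroup.eq_of_le_of_card_ge (Subgroup.zpowers_le.mpr y.2)
      (by rw [hK, Nat.card_zpowers, hgo])
  obtain ⟨v, x, hvx⟩ := mkG_surj (y : Gamma1)
  rw [hvx, mkG_mul, mkG_one, mkG_eq_iff] at hgsq
  obtain ⟨hvv, hxx⟩ := hgsq
  rcases (by decide : ∀ z : ZMod 4, z + z = 0 → z = 0 ∨ z = 2) x hxx with rfl | rfl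
  · exfalso
    rw [act_zero] at hvv
    have hv : v = 0 := by
      funext i
      have := congrFun hvv i
      simp only [Pi.add_apply, Pi.zero_apply] at this ⊢
      omega
    rw [hv, ← mkG_one] at hvx
    exact hg1 hvx
  · have hv0 : v 0 = 0 := by
      have := congrFun hvv 0
      simp [act_two] at this
      omega
    have hv1 : v 1 = 0 := by
      have := congrFun hvv 1
      simp [act_two] at this
      omega
    have hb0 : rr v 0 = 0 := by simp [rr, hv0]
    have hb1 : rr v 1 = 0 := by simp [rr, hv1]
    obtain ⟨j, hj⟩ := surround (rr v) hb0 hb1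
    have hex : ∃ γ : Gamma1, γ * gg j * γ⁻¹ = mkG v 2 := by
      rcases hj with hj | hj
      · refine conj_exists v j 0 ?_ ?_ hv0 hv1 ?_
        · rw [act_zero]; exact (W01 j).1
        · rw [act_zero]; exact (W01 j).2
        · rw [act_zero]; exact hj
      · refine conj_exists v j 1 ?_ ?_ hv0 hv1 ?_
        · rw [act_one]; simp [(W01 j).1]
        · rw [act_one]; simp [(W01 j).2]
        · rw [rr_act_one]; exact hj
    obtain ⟨γ, hγ⟩ := hex
    refine ⟨j, γ, ?_⟩
    rw [HH, MonoidHom.map_zpowers,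
      show (MulAut.conj γ).toMonoidHom (gg j) = γ * gg j * γ⁻¹ from rfl, hγ, ← hvx, hzK]

end G1P
namespace G1P

lemma mem_normalizer_HH (j : Fin 10) (γ : Gamma1) :
    γ ∈ Subgroup.normalizer (HH j : Set Gamma1) ↔ γ * gg j * γ⁻¹ = gg j := by
  constructor
  · intro h
    have h1 : γ * gg j * γ⁻¹ ∈ HH j :=
      (Subgroup.mem_normalizer_iff.mp h (gg j)).mp (Subgroup.mem_zpowers _)
    rcases mem_zpowers_order2 (gg_sq j) h1 with h2 | h2
    · exfalso
      obtain ⟨u, x, rfl⟩ := mkG_surj γ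
      rw [conj_gg] at h2
      exact mkG2_ne_one _ h2
    · exact h2
  · intro h
    rw [Subgroup.mem_normalizer_iff]
    intro y
    constructor
    · intro hy
      rcases mem_zpowers_order2 (gg_sq j) hy with rfl | rfl
      · simpa using Subgroup.one_mem _
      · rw [h]; exact Subgroup.mem_zpowers _
    · intro hy
      rcases mem_zpowers_order2 (gg_sq j) hy with h2 | h2
      · have : y = 1 := by
          have := congrArg (fun z => γ⁻¹ * z * γ) h2
          simpa [mul_assoc] using this
        rw [this]; exact Subgroup.one_mem _
      · have : y = gg j := by
          have h3 : γ * y * γ⁻¹ = γ * gg j * γ⁻¹ := by rw [h2, h]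
          have := congrArg (fun z => γ⁻¹ * z * γ) h3
          simpa [mul_assoc] using this
        rw [this]; exact Subgroup.mem_zpowers _

lemma mem_normalizer_mkG (j : Fin 10) (u : Fin 6 → ℤ) (x : ZMod 4) :
    mkG u x ∈ Subgroup.normalizer (HH j : Set Gamma1) ↔ u + act x (W j) - act 2 u = W j := by
  rw [mem_normalizer_HH, conj_gg, show gg j = mkG (W j) 2 from rfl, mkG_eq_iff]
  simp

/-- the translation subgroup ℤ² (coords 0,1) -/
def tr : Multiplicative (Fin 2 → ℤ) →* Gamma1 where
  toFun a := mkG ![Multiplicative.toAdd a 0, Multiplicative.toAdd a 1, 0, 0, 0, 0] 0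
  map_one' := by
    rw [mkG_one, mkG_eq_iff]
    refine ⟨?_, rfl⟩
    funext i; fin_cases i <;> rfl
  map_mul' a b := by
    rw [mkG_mul, act_zero, mkG_eq_iff]
    refine ⟨?_, rfl⟩
    funext i; fin_cases i <;> simp

lemma tr_apply (a : Multiplicative (Fin 2 → ℤ)) :
    tr a = mkG ![Multiplicative.toAdd a 0, Multiplicative.toAdd a 1, 0, 0, 0, 0] 0 := rfl

lemma tr_inj : Function.Injective tr := by
  intro a b h
  have := (mkG_inj h).1
  apply Multiplicative.toAdd.injective
  funext i
  fin_cases i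
  · exact congrFun this 0
  · exact congrFun this 1

end G1P
namespace G1P
open Multiplicative

lemma act_two_tr (a : Fin 2 → ℤ) :
    act 2 ![a 0, a 1, 0, 0, 0, 0] = ![a 0, a 1, 0, 0, 0, 0] := by
  rw [act_two]; funext i; fin_cases i <;> simp

lemma tr_comm_gg (j : Fin 10) (a : Multiplicative (Fin 2 → ℤ)) :
    Commute (tr a) (gg j) := by
  show tr a * gg j = gg j * tr a
  rw [tr_apply a, show gg j = mkG (W j) 2 from rfl, mkG_mul, mkG_mul, act_zero,
    act_two_tr, mkG_eq_iff]
  exact ⟨add_comm _ _, by decide⟩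

def ggHom (j : Fin 10) : Multiplicative (ZMod 2) →* Gamma1 :=
  zmodPowHom 2 (gg j) (by rw [pow_two]; exact gg_sq j)

lemma ggHom_zero (j : Fin 10) : ggHom j (ofAdd 0) = 1 := map_one _

lemma ggHom_one (j : Fin 10) : ggHom j (ofAdd 1) = gg j := by
  show gg j ^ (1 : ZMod 2).val = gg j
  rw [show (1 : ZMod 2).val = 1 from rfl, pow_one]

def fN1 (j : Fin 10) : N1 →* Gamma1 :=
  MonoidHom.noncommCoprod tr (ggHom j)
    (fun a t => by
      show Commute (tr a) (gg j ^ (toAdd t).val)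
      exact (tr_comm_gg j a).pow_right _)

lemma zmod2_cases : ∀ t : Multiplicative (ZMod 2), t = ofAdd 0 ∨ t = ofAdd 1 := by decide

lemma fN1_apply₀ (j : Fin 10) (a : Multiplicative (Fin 2 → ℤ)) :
    fN1 j (a, ofAdd 0) = mkG ![toAdd a 0, toAdd a 1, 0, 0, 0, 0] 0 := by
  show tr a * ggHom j (ofAdd 0) = _
  rw [ggHom_zero, mul_one, tr_apply]

lemma fN1_apply₁ (j : Fin 10) (a : Multiplicative (Fin 2 → ℤ)) :
    fN1 j (a, ofAdd 1) =
      mkG ![toAdd a 0, toAdd a 1, W j 2, W j 3, W j 4, W j 5] 2 := by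
  show tr a * ggHom j (ofAdd 1) = _
  rw [ggHom_one, tr_apply, show gg j = mkG (W j) 2 from rfl, mkG_mul, act_zero, mkG_eq_iff]
  refine ⟨?_, by decide⟩
  funext i
  fin_cases i <;> simp [(W01 j).1, (W01 j).2]

lemma fN1_inj (j : Fin 10) : Function.Injective (fN1 j) := by
  rintro ⟨a, t⟩ ⟨b, s⟩ h
  rcases zmod2_cases t with rfl | rfl <;> rcases zmod2_cases s with rfl | rfl
  · rw [fN1_apply₀, fN1_apply₀] at h
    obtain ⟨hv, -⟩ := mkG_inj h
    refine Prod.ext ?_ rfl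
    apply toAdd.injective; funext i; fin_cases i
    · exact congrFun hv 0
    · exact congrFun hv 1
  · rw [fN1_apply₀, fN1_apply₁] at h
    exact absurd (mkG_inj h).2 (by decide)
  · rw [fN1_apply₁, fN1_apply₀] at h
    exact absurd (mkG_inj h).2 (by decide)
  · rw [fN1_apply₁, fN1_apply₁] at h
    obtain ⟨hv, -⟩ := mkG_inj h
    refine Prod.ext ?_ rfl
    apply toAdd.injective; funext i; fin_cases i
    · exact congrFun hv 0
    · exact congrFun hv 1

lemma fN1_range (j : Fin 10) (hodd : Odd (W j 2 + W j 3) ∨ Odd (W j 4 + W j 5)) :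
    (fN1 j).range = Subgroup.normalizer (HH j : Set Gamma1) := by
  apply Subgroup.ext
  intro γ
  constructor
  · rintro ⟨⟨a, t⟩, rfl⟩
    rcases zmod2_cases t with rfl | rfl
    · rw [fN1_apply₀, mem_normalizer_mkG, act_zero, act_two_tr]
      ring
    · rw [fN1_apply₁, mem_normalizer_mkG, act_two, act_two]
      funext i
      fin_cases i <;> simp [(W01 j).1, (W01 j).2] <;> ring
  · intro hγ
    obtain ⟨u, x, rfl⟩ := mkG_surj γ
    rw [mem_normalizer_mkG] at hγ
    rcases (by decide : ∀ y : ZMod 4, y = 0 ∨ y = 1 ∨ y = 2 ∨ y = 3) x with rfl | rfl | rfl | rfl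
    · refine ⟨(ofAdd ![u 0, u 1], ofAdd 0), ?_⟩
      rw [fN1_apply₀, mkG_eq_iff]
      refine ⟨?_, rfl⟩
      rw [act_zero, act_two] at hγ
      have h2 := congrFun hγ 2; have h3 := congrFun hγ 3
      have h4 := congrFun hγ 4; have h5 := congrFun hγ 5
      simp only [Pi.add_apply, Pi.sub_apply, v6_0, v6_1, v6_2, v6_3, v6_4, v6_5] at h2 h3 h4 h5
      clear hγ
      funext i
      fin_cases i <;> simp <;> omega
    · exfalso
      rw [act_one, act_two] at hγ
      have h3 := congrFun hγ 3; have h5 := congrFun hγ 5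
      simp only [Pi.add_apply, Pi.sub_apply] at h3 h5
      simp only [v6_3, v6_5] at h3 h5
      rcases hodd with ⟨m, hm⟩ | ⟨m, hm⟩ <;> omega
    · refine ⟨(ofAdd ![u 0, u 1], ofAdd 1), ?_⟩
      rw [fN1_apply₁, mkG_eq_iff]
      refine ⟨?_, rfl⟩
      rw [act_two, act_two] at hγ
      have h2 := congrFun hγ 2; have h3 := congrFun hγ 3
      have h4 := congrFun hγ 4; have h5 := congrFun hγ 5
      simp only [Pi.add_apply, Pi.sub_apply, v6_0, v6_1, v6_2, v6_3, v6_4, v6_5] at h2 h3 h4 h5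
      clear hγ
      funext i
      fin_cases i <;> simp <;> omega
    · exfalso
      rw [act_three, act_two] at hγ
      have h2 := congrFun hγ 2; have h4 := congrFun hγ 4
      simp only [Pi.add_apply, Pi.sub_apply] at h2 h4
      simp only [v6_2, v6_4] at h2 h4
      rcases hodd with ⟨m, hm⟩ | ⟨m, hm⟩ <;> omega

lemma normalizer_equiv_N1 (j : Fin 10) (hodd : Odd (W j 2 + W j 3) ∨ Odd (W j 4 + W j 5)) :
    Nonempty (Subgroup.normalizer (HH j : Set Gamma1) ≃* N1) :=
  ⟨((MonoidHom.ofInjective (fN1_inj j)).trans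
      (MulEquiv.subgroupCongr (fN1_range j hodd))).symm⟩

end G1P
namespace G1P
open Multiplicative

section N2part

variable (j : Fin 10)

/-- the order-4 element `s` with `s² = gg j` (when `W j 3 = W j 2`, `W j 5 = W j 4`) -/
def sElt : Gamma1 := mkG ![0, 0, 0, W j 2, 0, W j 4] 1

variable (h3 : W j 3 = W j 2) (h5 : W j 5 = W j 4)

include h3 h5

lemma sElt_sq : sElt j * sElt j = gg j := by
  rw [sElt, mkG_mul, act_one, show gg j = mkG (W j) 2 from rfl, mkG_eq_iff]
  refine ⟨?_, by decide⟩
  funext i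
  fin_cases i <;> simp [(W01 j).1, (W01 j).2, h3, h5]

lemma sElt_pow4 : sElt j ^ 4 = 1 := by
  have h : sElt j ^ 4 = sElt j ^ 2 * sElt j ^ 2 := by rw [← pow_add]
  rw [h, pow_two, sElt_sq j h3 h5, gg_sq]

/-- `C4 →* Gamma1` sending the generator to `sElt j`. -/
def fC4 : C4 →* Gamma1 := zmodPowHom 4 (sElt j) (sElt_pow4 j h3 h5)

lemma fC4_apply (z : ZMod 4) : fC4 j h3 h5 (ofAdd z) = sElt j ^ z.val := rfl

lemma sElt_cube : sElt j ^ 3 = mkG ![0, 0, W j 2, 0, W j 4, 0] 3 := by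
  rw [pow_succ, pow_two, sElt_sq j h3 h5, sElt, show gg j = mkG (W j) 2 from rfl, mkG_mul, act_two, mkG_eq_iff]
  refine ⟨?_, by decide⟩
  funext i
  fin_cases i <;> simp [(W01 j).1, (W01 j).2, h3, h5]

end N2part

lemma zmod4_cases : ∀ z : ZMod 4, z = 0 ∨ z = 1 ∨ z = 2 ∨ z = 3 := by decide

lemma negRep_apply (z : ZMod 4) (a : Fin 2 → ℤ) :
    negRep (ofAdd z) a = (-1 : ℤ) ^ z.val • a := by
  show ((-1 : Module.End ℤ (Fin 2 → ℤ)) ^ (toAdd (ofAdd z)).val) a = _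
  rw [show (-1 : Module.End ℤ (Fin 2 → ℤ)) = (-1 : ℤ) • 1 by rw [neg_smul, one_smul],
    smul_pow, one_pow, LinearMap.smul_apply, Module.End.one_apply]
  rfl

section N2part2

variable (j : Fin 10) (h3 : W j 3 = W j 2) (h5 : W j 5 = W j 4)

lemma conj_sElt_tr (a : Multiplicative (Fin 2 → ℤ)) :
    sElt j * tr a * (sElt j)⁻¹ = tr (ofAdd (-(toAdd a))) := by
  rw [tr_apply a, sElt, conj_mkG, act_one, act_zero, tr_apply, mkG_eq_iff]
  refine ⟨?_, rfl⟩
  funext i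
  fin_cases i <;> simp

lemma fN2_compat : ∀ g : C4,
    tr.comp ((repMulAut negRep g).toMonoidHom)
      = (MulAut.conj (fC4 j h3 h5 g)).toMonoidHom.comp tr := by
  intro g
  refine MonoidHom.ext fun a => ?_
  show tr (ofAdd (negRep g (toAdd a))) = fC4 j h3 h5 g * tr a * (fC4 j h3 h5 g)⁻¹
  obtain ⟨z, rfl⟩ : ∃ z : ZMod 4, ofAdd z = g := ⟨toAdd g, rfl⟩
  rw [negRep_apply, fC4_apply]
  rcases zmod4_cases z with rfl | rfl | rfl | rfl
  · rw [show (0 : ZMod 4).val = 0 from rfl]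
    norm_num
  · rw [show (1 : ZMod 4).val = 1 from rfl, pow_one, pow_one, conj_sElt_tr]
    norm_num
  · rw [show (2 : ZMod 4).val = 2 from rfl, show sElt j ^ 2 = gg j by
      rw [pow_two]; exact sElt_sq j h3 h5]
    norm_num
    symm
    rw [mul_inv_eq_iff_eq_mul]
    exact ((tr_comm_gg j a).symm : gg j * tr a = tr a * gg j)
  · rw [show (3 : ZMod 4).val = 3 from rfl, sElt_cube j h3 h5, tr_apply a, conj_mkG,
      act_three, act_zero]
    rw [tr_apply, mkG_eq_iff]
    refine ⟨?_, rfl⟩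
    funext i
    fin_cases i <;> simp <;> ring

/-- `N2 →* Gamma1`. -/
def fN2 : N2 →* Gamma1 := SemidirectProduct.lift tr (fC4 j h3 h5) (fN2_compat j h3 h5)

lemma fN2_apply (a : Multiplicative (Fin 2 → ℤ)) (z : ZMod 4) :
    fN2 j h3 h5 ⟨a, ofAdd z⟩ = tr a * sElt j ^ z.val := rfl

lemma fN2_apply₀ (a : Multiplicative (Fin 2 → ℤ)) :
    fN2 j h3 h5 ⟨a, ofAdd 0⟩ = mkG ![toAdd a 0, toAdd a 1, 0, 0, 0, 0] 0 := by
  rw [fN2_apply, show (0 : ZMod 4).val = 0 from rfl, pow_zero, mul_one, tr_apply]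

lemma fN2_apply₁ (a : Multiplicative (Fin 2 → ℤ)) :
    fN2 j h3 h5 ⟨a, ofAdd 1⟩
      = mkG ![toAdd a 0, toAdd a 1, 0, W j 2, 0, W j 4] 1 := by
  rw [fN2_apply, show (1 : ZMod 4).val = 1 from rfl, pow_one, tr_apply, sElt, mkG_mul,
    act_zero, mkG_eq_iff]
  refine ⟨?_, rfl⟩
  funext i
  fin_cases i <;> simp

lemma fN2_apply₂ (a : Multiplicative (Fin 2 → ℤ)) :
    fN2 j h3 h5 ⟨a, ofAdd 2⟩
      = mkG ![toAdd a 0, toAdd a 1, W j 2, W j 3, W j 4, W j 5] 2 := by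
  rw [fN2_apply, show (2 : ZMod 4).val = 2 from rfl, pow_two, sElt_sq j h3 h5, tr_apply,
    show gg j = mkG (W j) 2 from rfl, mkG_mul, act_zero, mkG_eq_iff]
  refine ⟨?_, rfl⟩
  funext i
  fin_cases i <;> simp [(W01 j).1, (W01 j).2]

lemma fN2_apply₃ (a : Multiplicative (Fin 2 → ℤ)) :
    fN2 j h3 h5 ⟨a, ofAdd 3⟩
      = mkG ![toAdd a 0, toAdd a 1, W j 2, 0, W j 4, 0] 3 := by
  rw [fN2_apply, show (3 : ZMod 4).val = 3 from rfl, sElt_cube j h3 h5, tr_apply, mkG_mul,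
    act_zero, mkG_eq_iff]
  refine ⟨?_, rfl⟩
  funext i
  fin_cases i <;> simp

lemma fN2_inj : Function.Injective (fN2 j h3 h5) := by
  rintro ⟨a, x⟩ ⟨b, y⟩ h
  obtain ⟨z, rfl⟩ : ∃ z : ZMod 4, ofAdd z = x := ⟨toAdd x, rfl⟩
  obtain ⟨z', rfl⟩ : ∃ z : ZMod 4, ofAdd z = y := ⟨toAdd y, rfl⟩
  have hab : toAdd a 0 = toAdd b 0 ∧ toAdd a 1 = toAdd b 1 → a = b := by
    rintro ⟨h0, h1⟩
    apply toAdd.injective; funext i; fin_cases i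
    · exact h0
    · exact h1
  rcases zmod4_cases z with rfl | rfl | rfl | rfl <;>
    rcases zmod4_cases z' with rfl | rfl | rfl | rfl <;>
    simp only [fN2_apply₀ j h3 h5, fN2_apply₁ j h3 h5, fN2_apply₂ j h3 h5,
      fN2_apply₃ j h3 h5] at h <;>
    obtain ⟨hv, hz⟩ := mkG_inj h <;>
    first
      | exact absurd hz (by decide)
      | rw [hab ⟨congrFun hv 0, congrFun hv 1⟩]

lemma fN2_range : (fN2 j h3 h5).range = Subgroup.normalizer (HH j : Set Gamma1) := by
  apply Subgroup.ext
  intro γ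
  constructor
  · rintro ⟨⟨a, x⟩, rfl⟩
    obtain ⟨z, rfl⟩ : ∃ z : ZMod 4, ofAdd z = x := ⟨toAdd x, rfl⟩
    rcases zmod4_cases z with rfl | rfl | rfl | rfl
    · rw [fN2_apply₀, mem_normalizer_mkG, act_zero, act_two]
      funext i
      fin_cases i <;> simp [(W01 j).1, (W01 j).2]
    · rw [fN2_apply₁, mem_normalizer_mkG, act_one, act_two]
      funext i
      fin_cases i <;> simp [(W01 j).1, (W01 j).2] <;> omega
    · rw [fN2_apply₂, mem_normalizer_mkG, act_two, act_two]
      funext i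
      fin_cases i <;> simp [(W01 j).1, (W01 j).2] <;> omega
    · rw [fN2_apply₃, mem_normalizer_mkG, act_three, act_two]
      funext i
      fin_cases i <;> simp [(W01 j).1, (W01 j).2] <;> omega
  · intro hγ
    obtain ⟨u, x, rfl⟩ := mkG_surj γ
    rw [mem_normalizer_mkG] at hγ
    rcases zmod4_cases x with rfl | rfl | rfl | rfl
    · refine ⟨⟨ofAdd ![u 0, u 1], ofAdd 0⟩, ?_⟩
      rw [fN2_apply₀, mkG_eq_iff]
      refine ⟨?_, rfl⟩
      rw [act_zero, act_two] at hγ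
      have e2 := congrFun hγ 2; have e3 := congrFun hγ 3
      have e4 := congrFun hγ 4; have e5 := congrFun hγ 5
      simp only [Pi.add_apply, Pi.sub_apply, v6_0, v6_1, v6_2, v6_3, v6_4, v6_5] at e2 e3 e4 e5
      clear hγ
      funext i
      fin_cases i <;> simp <;> omega
    · refine ⟨⟨ofAdd ![u 0, u 1], ofAdd 1⟩, ?_⟩
      rw [fN2_apply₁, mkG_eq_iff]
      refine ⟨?_, rfl⟩
      rw [act_one, act_two] at hγ
      have e2 := congrFun hγ 2; have e3 := congrFun hγ 3
      have e4 := congrFun hγ 4; have e5 := congrFun hγ 5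
      simp only [Pi.add_apply, Pi.sub_apply, v6_0, v6_1, v6_2, v6_3, v6_4, v6_5] at e2 e3 e4 e5
      clear hγ
      funext i
      fin_cases i <;> simp <;> omega
    · refine ⟨⟨ofAdd ![u 0, u 1], ofAdd 2⟩, ?_⟩
      rw [fN2_apply₂, mkG_eq_iff]
      refine ⟨?_, rfl⟩
      rw [act_two, act_two] at hγ
      have e2 := congrFun hγ 2; have e3 := congrFun hγ 3
      have e4 := congrFun hγ 4; have e5 := congrFun hγ 5
      simp only [Pi.add_apply, Pi.sub_apply, v6_0, v6_1, v6_2, v6_3, v6_4, v6_5] at e2 e3 e4 e5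
      clear hγ
      funext i
      fin_cases i <;> simp <;> omega
    · refine ⟨⟨ofAdd ![u 0, u 1], ofAdd 3⟩, ?_⟩
      rw [fN2_apply₃, mkG_eq_iff]
      refine ⟨?_, rfl⟩
      rw [act_three, act_two] at hγ
      have e2 := congrFun hγ 2; have e3 := congrFun hγ 3
      have e4 := congrFun hγ 4; have e5 := congrFun hγ 5
      simp only [Pi.add_apply, Pi.sub_apply, v6_0, v6_1, v6_2, v6_3, v6_4, v6_5] at e2 e3 e4 e5
      clear hγ
      funext i
      fin_cases i <;> simp <;> omega

end N2part2

lemma normalizer_equiv_N2 (j : Fin 10) (h3 : W j 3 = W j 2) (h5 : W j 5 = W j 4) :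
    Nonempty (Subgroup.normalizer (HH j : Set Gamma1) ≃* N2) :=
  ⟨((MonoidHom.ofInjective (fN2_inj j h3 h5)).trans
      (MulEquiv.subgroupCongr (fN2_range j h3 h5))).symm⟩
end G1P

/-- `Γ₁` has exactly ten conjugacy classes of subgroups of order two; six of the
classes consist of subgroups with normalizer isomorphic to `ℤ² × ℤ/2`, and four consist of
subgroups with normalizer isomorphic to `ℤ² ⋊ ℤ/4` (the generator of `ℤ/4` acting on `ℤ²` by
multiplication by `-1`). -/
theorem Gamma1_order_two_conjugacy_classes :
    ∃ H : Fin 10 → Subgroup Gamma1,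
      (∀ j, Nat.card (H j) = 2) ∧
      (∀ j k : Fin 10, j ≠ k → ∀ γ : Gamma1,
        Subgroup.map (MulAut.conj γ).toMonoidHom (H j) ≠ H k) ∧
      (∀ K : Subgroup Gamma1, Nat.card K = 2 → ∃ (j : Fin 10) (γ : Gamma1),
        Subgroup.map (MulAut.conj γ).toMonoidHom (H j) = K) ∧
      (∀ j : Fin 10, (j : ℕ) < 6 → Nonempty (Subgroup.normalizer (H j : Set Gamma1) ≃* N1)) ∧
      (∀ j : Fin 10, 6 ≤ (j : ℕ) → Nonempty (Subgroup.normalizer (H j : Set Gamma1) ≃* N2)) := by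
  
  refine ⟨G1P.HH, G1P.card_HH, G1P.not_conj, G1P.complete, ?_, ?_⟩
  · intro j hj
    fin_cases j
    · exact G1P.normalizer_equiv_N1 _ (by decide)
    · exact G1P.normalizer_equiv_N1 _ (by decide)
    · exact G1P.normalizer_equiv_N1 _ (by decide)
    · exact G1P.normalizer_equiv_N1 _ (by decide)
    · exact G1P.normalizer_equiv_N1 _ (by decide)
    · exact G1P.normalizer_equiv_N1 _ (by decide)
    all_goals simp at hj
  · intro j hj
    fin_cases j
    all_goals first
      | exact G1P.normalizer_equiv_N2 _ (by decide) (by decide)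
      | simp at hj
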